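/- Fix k ≥ 0 and let S^{(k)}_{λ/μ}(x;y) = det(ϑ_{λ_i − μ_j + j − i}(x;y))_{i,j}. For partitions μ ⊆ λ, S^{(k)}_{λ/μ}(x;y) = ∑_ν S_{λ/ν}(x) s_{ν'/μ'}(y) = ∑_ν S_{ν/μ}(x) s_{λ'/ν'}(y), where both sums are over partitions ν with μ ⊆ ν ⊆ λ. -/

import Mathlib

/-- `e_i(y)` for `i : ℕ`. -/
def esymmVal {R : Type*} [CommRing R] {k : ℕ} (y : Fin k → R) (i : ℕ) : R :=
  ∑ s ∈ Finset.powersetCard i (Finset.univ : Finset (Fin k)), ∏ j ∈ s, y j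

/-- `q_r(x)` for `r : ℤ` (zero for negative `r`): the `r`-th coefficient of `Q`. -/
noncomputable def qInt {R : Type*} [CommRing R] (Q : PowerSeries R) (r : ℤ) : R :=
  if 0 ≤ r then PowerSeries.coeff r.toNat Q else 0

/-- `e_r(y)` for `r : ℤ` (zero for negative `r`). -/
def eInt {R : Type*} [CommRing R] {k : ℕ} (y : Fin k → R) (r : ℤ) : R :=
  if 0 ≤ r then esymmVal y r.toNat else 0

/-- `ϑ_r(x;y) = ∑_i q_{r-i}(x) e_i(y)` for `r : ℤ` (zero for negative `r`). -/
noncomputable def thInt {R : Type*} [CommRing R] {k : ℕ}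
    (Q : PowerSeries R) (y : Fin k → R) (r : ℤ) : R :=
  if 0 ≤ r then
    ∑ i ∈ Finset.range (r.toNat + 1), PowerSeries.coeff (r.toNat - i) Q * esymmVal y i
  else 0

/-- The skew Jacobi–Trudi determinant `det(c_{λ_i − μ_j + j − i})_{1≤i,j≤L}`. -/
def jtDet {R : Type*} [CommRing R] {L : ℕ} (c : ℤ → R) (lam mu : Fin L → ℕ) : R :=
  Matrix.det (Matrix.of fun i j : Fin L =>
    c ((lam i : ℤ) - (mu j : ℤ) + (j : ℕ) - (i : ℕ)))

section Helpers

open Finset Equiv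


theorem det_zero_block {R : Type*} [CommRing R] {L : ℕ} (Mx : Matrix (Fin L) (Fin L) R)
    (i0 : Fin L) (h : ∀ i j, i0 ≤ i → j ≤ i0 → Mx i j = 0) : Mx.det = 0 := by
  rw [Matrix.det_apply]
  refine Finset.sum_eq_zero fun σ _ => ?_
  obtain ⟨j, hj, hσj⟩ : ∃ j, j ≤ i0 ∧ i0 ≤ σ j := by
    by_contra hcon
    push_neg at hcon
    have hmap : ∀ j ∈ Finset.Iic i0, σ j ∈ Finset.Iio i0 := by
      intro j hj
      simp only [Finset.mem_Iic] at hj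
      simp only [Finset.mem_Iio]
      exact hcon j hj
    have hcard := Finset.card_le_card_of_injOn σ hmap σ.injective.injOn
    rw [Fin.card_Iic, Fin.card_Iio] at hcard
    omega
  have hz : (fun i => Mx (σ i) i) j = 0 := h _ _ hσj hj
  rw [show (∏ i, Mx (σ i) i) = 0 from Finset.prod_eq_zero (Finset.mem_univ j) hz, smul_zero]

theorem strictMono_gap {L M : ℕ} (g : Fin L → Fin M) (hg : StrictMono g) :
    ∀ i j : Fin L, i ≤ j → (j : ℤ) - i ≤ (g j : ℤ) - g i := by
  intro i j hij
  have key : ∀ m : ℕ, ∀ i j : Fin L, i ≤ j → (j : ℕ) = i + m → (j : ℕ) - i ≤ (g j : ℕ) - g i := by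
    intro m
    induction m with
    | zero => intro i j _ hm; have : i = j := Fin.ext (by omega); subst this; omega
    | succ p ih =>
      intro i j hij hm
      have hjpos : 0 < (j : ℕ) := by omega
      set j' : Fin L := ⟨(j : ℕ) - 1, by omega⟩ with hj'
      have h1 : i ≤ j' := by rw [Fin.le_def]; simp [hj']; omega
      have hj'v : (j' : ℕ) = (j : ℕ) - 1 := rfl
      have h2 := ih i j' h1 (by simp [hj']; omega)
      have h3 : j' < j := by rw [Fin.lt_def]; simp [hj']; omega
      have h4 := hg h3
      rw [Fin.lt_def] at h4
      have h5 : (g i : ℕ) ≤ g j' := by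
        rcases eq_or_lt_of_le h1 with h | h
        · rw [h]
        · exact le_of_lt (hg h)
      omega
  have h6 := key ((j : ℕ) - i) i j hij (by omega)
  have h7 : (g i : ℕ) ≤ g j := by
    rcases eq_or_lt_of_le hij with h | h
    · rw [h]
    · exact le_of_lt (hg h)
  omega


theorem myCauchyBinet {R : Type*} [CommRing R] {L M : ℕ}
    (A : Matrix (Fin L) (Fin M) R) (B : Matrix (Fin M) (Fin L) R) :
    (A * B).det = ∑ g ∈ univ.filter (fun g : Fin L → Fin M => StrictMono g),
      (A.submatrix id g).det * (B.submatrix g id).det := by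
  classical
  have expand : ∀ σ : Equiv.Perm (Fin L), (∏ i, (A * B) (σ i) i)
      = ∑ p : Fin L → Fin M, ∏ i, (A (σ i) (p i) * B (p i) i) := by
    intro σ
    simp only [Matrix.mul_apply]
    rw [Finset.prod_univ_sum, Fintype.piFinset_univ]
  rw [Matrix.det_apply]
  simp only [expand, Finset.smul_sum]
  rw [Finset.sum_comm]
  have key : ∀ p : Fin L → Fin M,
      (∑ σ : Equiv.Perm (Fin L), Equiv.Perm.sign σ • ∏ i, (A (σ i) (p i) * B (p i) i))
      = (∏ i, B (p i) i) * (A.submatrix id p).det := by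
    intro p
    rw [Matrix.det_apply, Finset.mul_sum]
    refine Finset.sum_congr rfl fun σ _ => ?_
    rw [Finset.prod_mul_distrib, mul_smul_comm, mul_comm]
    rfl
  simp only [key]
  -- kill non-injective p
  rw [← Finset.sum_subset (Finset.filter_subset
      (fun p : Fin L → Fin M => Function.Injective p) Finset.univ) ?hvan]
  case hvan =>
    intro p _ hp
    simp only [mem_filter, mem_univ, true_and] at hp
    obtain ⟨a, b, hab, hne⟩ := Function.not_injective_iff.mp hp
    rw [Matrix.det_zero_of_column_eq hne (fun k => by
      simp [Matrix.submatrix_apply, hab]), mul_zero]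
  -- bijection with pairs (g, σ)
  have hsplit : ∑ p ∈ univ.filter (fun p : Fin L → Fin M => Function.Injective p),
      (∏ i, B (p i) i) * (A.submatrix id p).det
      = ∑ q ∈ (univ.filter (fun g : Fin L → Fin M => StrictMono g)) ×ˢ
          (univ : Finset (Perm (Fin L))),
        (∏ i, B (q.1 (q.2 i)) i) * (A.submatrix id (q.1 ∘ q.2)).det := by
    refine (Finset.sum_bij (fun q _ => q.1 ∘ q.2) ?_ ?_ ?_ ?_).symm
    · rintro ⟨g, σ⟩ hq
      simp only [Finset.mem_product, mem_filter, mem_univ, true_and, and_true] at hq ⊢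
      exact hq.injective.comp σ.injective
    · rintro ⟨g, σ⟩ hq ⟨g', σ'⟩ hq' h
      simp only [Finset.mem_product, mem_filter, mem_univ, true_and, and_true] at hq hq'
      have h' : g ∘ σ = g' ∘ σ' := h
      have himg : univ.image g = univ.image g' := by
        have h2 : (univ.image σ).image g = (univ.image σ').image g' := by
          rw [Finset.image_image, Finset.image_image, h']
        simpa [Finset.image_univ_equiv] using h2
      have hc : (univ.image g).card = L := by
        rw [Finset.card_image_of_injective _ hq.injective, card_univ, Fintype.card_fin]
      have hc' : (univ.image g').card = L := by
        rw [Finset.card_image_of_injective _ hq'.injective, card_univ, Fintype.card_fin]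
      have hg1 : g = (univ.image g).orderEmbOfFin hc :=
        Finset.orderEmbOfFin_unique hc (fun x => Finset.mem_image_of_mem _ (mem_univ x)) hq
      have hg2 : g' = (univ.image g).orderEmbOfFin hc :=
        Finset.orderEmbOfFin_unique hc
          (fun x => himg ▸ Finset.mem_image_of_mem _ (mem_univ x)) hq'
      have hgg : g = g' := hg1.trans hg2.symm
      subst hgg
      have hσσ : σ = σ' := by
        ext i
        exact congrArg Fin.val (hq.injective (congrFun h' i))
      rw [hσσ]
    · intro p hp
      simp only [mem_filter, mem_univ, true_and] at hp
      set s := univ.image p with hs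
      have hc : s.card = L := by
        rw [hs, Finset.card_image_of_injective _ hp, card_univ, Fintype.card_fin]
      have hmem : ∀ i, p i ∈ s := fun i => Finset.mem_image_of_mem _ (mem_univ i)
      set φ : Fin L → Fin L := fun i => (s.orderIsoOfFin hc).symm ⟨p i, hmem i⟩ with hφ
      have hφinj : Function.Injective φ := by
        intro a b hab
        have := (s.orderIsoOfFin hc).symm.injective hab
        exact hp (congrArg Subtype.val this)
      refine ⟨⟨(s.orderEmbOfFin hc : Fin L → Fin M),
        Equiv.ofBijective φ ((Fintype.bijective_iff_injective_and_card φ).mpr ⟨hφinj, rfl⟩)⟩,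
        ?_, ?_⟩
      · simp only [Finset.mem_product, mem_filter, mem_univ, true_and, and_true]
        exact (s.orderEmbOfFin hc).strictMono
      · funext i
        show (s.orderEmbOfFin hc) (φ i) = p i
        rw [hφ]
        rw [← Finset.coe_orderIsoOfFin_apply]
        simp
    · intro q hq; rfl
  rw [hsplit, Finset.sum_product]
  refine Finset.sum_congr rfl fun g hg => ?_
  simp only [mem_filter, mem_univ, true_and] at hg
  have hdet : ∀ σ : Perm (Fin L),
      (A.submatrix id (g ∘ σ)).det = Perm.sign σ • (A.submatrix id g).det := by
    intro σ
    have h1 : A.submatrix id (g ∘ σ) = (A.submatrix id g).submatrix id σ := rfl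
    rw [h1, Matrix.det_permute']
    simp [Units.smul_def]
  simp only [hdet]
  rw [Matrix.det_apply (Matrix.submatrix B g id), Finset.mul_sum]
  refine Finset.sum_congr rfl fun σ _ => ?_
  rw [mul_smul_comm, mul_smul_comm, mul_comm]
  rfl

theorem conv_jtDet {R : Type*} [CommRing R] {L : ℕ} (c d : ℤ → R)
    (hc : ∀ r : ℤ, r < 0 → c r = 0) (hd : ∀ r : ℤ, r < 0 → d r = 0)
    (lam mu : Fin L → ℕ)
    (hlam : ∀ i j : Fin L, i ≤ j → lam j ≤ lam i)
    (hmu : ∀ i j : Fin L, i ≤ j → mu j ≤ mu i)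
    (hsub : mu ≤ lam) :
    jtDet (fun r => ∑ i ∈ Finset.range (r.toNat + 1), c (r - i) * d i) lam mu
      = ∑ ν ∈ (Finset.Icc mu lam).filter (fun ν => ∀ i j : Fin L, i ≤ j → ν j ≤ ν i),
          jtDet c lam ν * jtDet d ν mu := by
  classical
  set Am : ℕ := ∑ i, lam i with hAm
  set Mn : ℕ := Am + L with hMn
  have hlamAm : ∀ i : Fin L, lam i ≤ Am := fun i =>
    Finset.single_le_sum (f := lam) (fun _ _ => Nat.zero_le _) (Finset.mem_univ i)
  set T : Fin Mn → ℤ := fun t => (Am : ℤ) - t with hT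
  set A : Matrix (Fin L) (Fin Mn) R :=
    Matrix.of (fun i t => c ((lam i : ℤ) - i - T t)) with hA
  set B : Matrix (Fin Mn) (Fin L) R :=
    Matrix.of (fun t j => d (T t - ((mu j : ℤ) - j))) with hB
  -- Step 1: the theta matrix is A * B
  have hAB : jtDet (fun r => ∑ i ∈ Finset.range (r.toNat + 1), c (r - i) * d i) lam mu
      = (A * B).det := by
    unfold jtDet
    congr 1
    ext i j
    show (∑ s ∈ Finset.range ((((lam i : ℤ) - mu j + j - i)).toNat + 1),
        c ((lam i : ℤ) - mu j + j - i - s) * d s) = ∑ t, A i t * B t j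
    set α : ℤ := (lam i : ℤ) - i with hα
    set β : ℤ := (mu j : ℤ) - j with hβ
    have hr : (lam i : ℤ) - mu j + j - i = α - β := by rw [hα, hβ]; ring
    rw [hr]
    by_cases hrneg : α - β < 0
    · rw [Finset.sum_eq_zero, Finset.sum_eq_zero]
      · intro t _
        show c ((lam i : ℤ) - i - T t) * d (T t - ((mu j : ℤ) - j)) = 0
        rw [← hα, ← hβ]
        by_cases h1 : T t - β < 0
        · rw [hd _ h1, mul_zero]
        · rw [hc _ (by omega), zero_mul]
      · intro s _
        rw [hc _ (by omega), zero_mul]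
    · push_neg at hrneg
      -- restrict RHS to relevant t, then biject
      rw [show (∑ t, A i t * B t j)
          = ∑ t ∈ univ.filter (fun t : Fin Mn => β ≤ T t ∧ T t ≤ α), A i t * B t j from by
        refine (Finset.sum_subset (Finset.filter_subset _ _) fun t _ ht => ?_).symm
        simp only [mem_filter, mem_univ, true_and, not_and, not_le] at ht
        show c ((lam i : ℤ) - i - T t) * d (T t - ((mu j : ℤ) - j)) = 0
        rw [← hα, ← hβ]
        by_cases h1 : β ≤ T t
        · rw [hc _ (by have := ht h1; omega), zero_mul]
        · rw [hd _ (by omega), mul_zero]]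
      have hαAm : α ≤ (Am : ℤ) := by
        have h1 := hlamAm i
        have h2 : ((lam i : ℕ) : ℤ) ≤ (Am : ℤ) := by exact_mod_cast h1
        rw [hα]; omega
      have hβlow : -(L : ℤ) < β := by
        have hj := j.isLt
        have h0 : (0:ℤ) ≤ (mu j : ℤ) := Int.natCast_nonneg _
        rw [hβ]; omega
      refine Finset.sum_nbij' (fun s => (⟨((Am : ℤ) - β - s).toNat, ?_⟩ : Fin Mn))
        (fun t => (T t - β).toNat) ?_ ?_ ?_ ?_ ?_
      · -- Fin bound
        rw [hMn]; omega
      · -- maps into filter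
        intro s hs
        simp only [Finset.mem_range] at hs
        simp only [mem_filter, mem_univ, true_and]
        have hsle : (s : ℤ) ≤ α - β := by omega
        have hnn : (0:ℤ) ≤ (Am : ℤ) - β - s := by omega
        have hTT : ((((Am : ℤ) - β - s).toNat : ℕ) : ℤ) = (Am : ℤ) - β - s :=
          Int.toNat_of_nonneg hnn
        constructor
        · show β ≤ (Am : ℤ) - ((((Am : ℤ) - β - s).toNat : ℕ) : ℤ)
          omega
        · show (Am : ℤ) - ((((Am : ℤ) - β - s).toNat : ℕ) : ℤ) ≤ α
          omega
      · -- reverse maps into range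
        intro t ht
        simp only [mem_filter, mem_univ, true_and] at ht
        simp only [Finset.mem_range]
        obtain ⟨h1, h2⟩ := ht
        omega
      · -- left inverse
        intro s hs
        simp only [Finset.mem_range] at hs
        have hsle : (s : ℤ) ≤ α - β := by omega
        have hnn : (0:ℤ) ≤ (Am : ℤ) - β - s := by omega
        have hTT : ((((Am : ℤ) - β - s).toNat : ℕ) : ℤ) = (Am : ℤ) - β - s :=
          Int.toNat_of_nonneg hnn
        show (((Am : ℤ) - ((((Am : ℤ) - β - s).toNat : ℕ) : ℤ)) - β).toNat = s
        omega
      · -- right inverse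
        intro t ht
        simp only [mem_filter, mem_univ, true_and] at ht
        obtain ⟨h1, h2⟩ := ht
        apply Fin.ext
        show ((Am : ℤ) - β - (((T t - β).toNat : ℕ) : ℤ)).toNat = (t : ℕ)
        have ht2 : T t = (Am : ℤ) - (t : ℕ) := rfl
        have htlt : (t : ℕ) < Mn := t.isLt
        rw [ht2] at h1 h2 ⊢
        omega
      · -- summands agree
        intro s hs
        simp only [Finset.mem_range] at hs
        have hsle : (s : ℤ) ≤ α - β := by omega
        have hnn : (0:ℤ) ≤ (Am : ℤ) - β - s := by omega
        have hTT : ((((Am : ℤ) - β - s).toNat : ℕ) : ℤ) = (Am : ℤ) - β - s :=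
          Int.toNat_of_nonneg hnn
        show c (α - β - s) * d s
            = c ((lam i : ℤ) - i - ((Am : ℤ) - ((((Am : ℤ) - β - s).toNat : ℕ) : ℤ)))
              * d (((Am : ℤ) - ((((Am : ℤ) - β - s).toNat : ℕ) : ℤ)) - ((mu j : ℤ) - j))
        congr 1
        · congr 1
          rw [hα]
          omega
        · congr 1
          rw [hβ] at hTT ⊢
          omega
  rw [hAB, myCauchyBinet]
  -- Step 2: restrict to "good" g
  have hrestrict : ∑ g ∈ univ.filter (fun g : Fin L → Fin Mn => StrictMono g),
      (A.submatrix id g).det * (B.submatrix g id).det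
      = ∑ g ∈ univ.filter (fun g : Fin L → Fin Mn => StrictMono g ∧
          (∀ j : Fin L, (mu j : ℤ) - j ≤ T (g j)) ∧ (∀ j : Fin L, T (g j) ≤ (lam j : ℤ) - j)),
        (A.submatrix id g).det * (B.submatrix g id).det := by
    refine (Finset.sum_subset ?_ ?_).symm
    · intro g hg
      simp only [mem_filter, mem_univ, true_and] at hg ⊢
      exact hg.1
    intro g hg1 hg2
    simp only [mem_filter, mem_univ, true_and] at hg1
    by_cases hlow : ∀ j : Fin L, (mu j : ℤ) - j ≤ T (g j)
    case neg =>
      push_neg at hlow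
      obtain ⟨j0, hj0⟩ := hlow
      rw [det_zero_block (B.submatrix g id) j0 ?_, mul_zero]
      intro r jj hr hjj
      show d (T (g r) - ((mu jj : ℤ) - jj)) = 0
      refine hd _ ?_
      have h1 : (g j0 : ℤ) ≤ g r := by
        exact_mod_cast (hg1.monotone hr : g j0 ≤ g r)
      have h2 : (mu j0 : ℤ) ≤ mu jj := by exact_mod_cast hmu jj j0 hjj
      have h3 : (jj : ℤ) ≤ j0 := by exact_mod_cast (hjj : jj ≤ j0)
      simp only [hT] at hj0 ⊢
      omega
    case pos =>
      have hhigh : ¬ ∀ j : Fin L, T (g j) ≤ (lam j : ℤ) - j := by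
        intro hhigh
        exact hg2 (by simp only [mem_filter, mem_univ, true_and]; exact ⟨hg1, hlow, hhigh⟩)
      push_neg at hhigh
      obtain ⟨i0, hi0⟩ := hhigh
      rw [det_zero_block (A.submatrix id g) i0 ?_, zero_mul]
      intro i r hi hr
      show c ((lam i : ℤ) - i - T (g r)) = 0
      refine hc _ ?_
      have h1 : (g r : ℤ) ≤ g i0 := by
        exact_mod_cast (hg1.monotone hr : g r ≤ g i0)
      have h2 : (lam i : ℤ) ≤ lam i0 := by exact_mod_cast hlam i0 i hi
      have h3 : (i0 : ℤ) ≤ i := by exact_mod_cast (hi : i0 ≤ i)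
      simp only [hT] at hi0 ⊢
      omega
  rw [hrestrict]
  -- Step 3: biject good g with partitions ν
  refine Finset.sum_nbij' (fun g => fun j : Fin L => (T (g j) + j).toNat)
    (fun ν => fun j : Fin L => (⟨Am + j - ν j, by omega⟩ : Fin Mn)) ?_ ?_ ?_ ?_ ?_
  · -- image in target
    intro g hg
    simp only [mem_filter, mem_univ, true_and] at hg ⊢
    obtain ⟨hmono, hlow, hhigh⟩ := hg
    have hval : ∀ j : Fin L, ((T (g j) + j).toNat : ℤ) = T (g j) + j := fun j =>
      Int.toNat_of_nonneg (by
        have h1 := hlow j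
        have h0 : (0:ℤ) ≤ (mu j : ℤ) := Int.natCast_nonneg _
        omega)
    constructor
    · rw [Finset.mem_Icc]
      constructor <;> intro j
      · have h1 := hlow j; have h2 := hval j
        have : (mu j : ℤ) ≤ ((T (g j) + j).toNat : ℤ) := by omega
        exact_mod_cast this
      · have h1 := hhigh j; have h2 := hval j
        have : ((T (g j) + j).toNat : ℤ) ≤ (lam j : ℤ) := by omega
        exact_mod_cast this
    · intro i j hij
      have h1 := strictMono_gap g hmono i j hij
      have h2 := hval i; have h3 := hval j
      have h4 : (i : ℤ) ≤ j := by exact_mod_cast (hij : i ≤ j)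
      have : ((T (g j) + j).toNat : ℤ) ≤ ((T (g i) + i).toNat : ℤ) := by
        simp only [hT] at h2 h3 ⊢; omega
      exact_mod_cast this
  · -- reverse image in source
    intro ν hν
    simp only [mem_filter, mem_univ, true_and, Finset.mem_Icc] at hν ⊢
    obtain ⟨⟨hlo, hhi⟩, hanti⟩ := hν
    have hνAm : ∀ j : Fin L, ν j ≤ Am := fun j => le_trans (hhi j) (hlamAm j)
    refine ⟨?_, ?_, ?_⟩
    · intro i j hij
      have h1 : ν j ≤ ν i := hanti i j (le_of_lt hij)
      have h2 : (i : ℕ) < j := hij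
      have h3 := hνAm i
      simp only [Fin.mk_lt_mk]
      omega
    · intro j
      have h1 := hhi j; have h2 := hνAm j
      have h3 := hlo j
      show (mu j : ℤ) - j ≤ (Am : ℤ) - ((Am + j - ν j : ℕ) : ℤ)
      have key : ((Am + (j:ℕ) - ν j : ℕ) : ℤ) = (Am : ℤ) + (j:ℕ) - ν j := by
        rw [Nat.cast_sub (by omega), Nat.cast_add]
      rw [key]
      have h4 : (mu j : ℤ) ≤ ν j := by exact_mod_cast h3
      omega
    · intro j
      have h2 := hνAm j
      have h1 := hhi j
      show (Am : ℤ) - ((Am + j - ν j : ℕ) : ℤ) ≤ (lam j : ℤ) - j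
      have key : ((Am + (j:ℕ) - ν j : ℕ) : ℤ) = (Am : ℤ) + (j:ℕ) - ν j := by
        rw [Nat.cast_sub (by omega), Nat.cast_add]
      rw [key]
      have h4 : (ν j : ℤ) ≤ lam j := by exact_mod_cast h1
      omega
  · -- left inverse
    intro g hg
    simp only [mem_filter, mem_univ, true_and] at hg
    obtain ⟨hmono, hlow, hhigh⟩ := hg
    funext j
    have h1 := hlow j
    have h0 : (0:ℤ) ≤ (mu j : ℤ) := by positivity
    have hval : ((T (g j) + j).toNat : ℤ) = T (g j) + j :=
      Int.toNat_of_nonneg (by omega)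
    have hgj : (g j : ℕ) < Mn := (g j).isLt
    apply Fin.ext
    show Am + (j : ℕ) - (T (g j) + (j:ℕ)).toNat = (g j : ℕ)
    set n : ℕ := (T (g j) + (j:ℕ)).toNat with hn
    simp only [hT] at hval h1
    omega
  · -- right inverse
    intro ν hν
    simp only [mem_filter, mem_univ, true_and, Finset.mem_Icc] at hν
    obtain ⟨⟨hlo, hhi⟩, hanti⟩ := hν
    funext j
    have h2 : ν j ≤ Am := le_trans (hhi j) (hlamAm j)
    show ((Am : ℤ) - ((Am + (j:ℕ) - ν j : ℕ) : ℤ) + (j:ℕ)).toNat = ν j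
    have key : ((Am + (j:ℕ) - ν j : ℕ) : ℤ) = (Am : ℤ) + (j:ℕ) - ν j := by
      rw [Nat.cast_sub (by omega), Nat.cast_add]
    rw [key]
    omega
  · -- summand equality
    intro g hg
    simp only [mem_filter, mem_univ, true_and] at hg
    obtain ⟨hmono, hlow, hhigh⟩ := hg
    have hval : ∀ j : Fin L, ((T (g j) + j).toNat : ℤ) = T (g j) + j := fun j =>
      Int.toNat_of_nonneg (by
        have h1 := hlow j
        have h0 : (0:ℤ) ≤ (mu j : ℤ) := Int.natCast_nonneg _
        omega)
    congr 1
    · unfold jtDet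
      congr 1
      ext i j
      show c ((lam i : ℤ) - i - T (g j)) = c ((lam i : ℤ) - ((T (g j) + j).toNat : ℤ) + j - i)
      congr 1
      rw [hval j]
      ring
    · unfold jtDet
      congr 1
      ext i j
      show d (T (g i) - ((mu j : ℤ) - j)) = d ((((T (g i) + i).toNat : ℤ)) - (mu j : ℤ) + j - i)
      congr 1
      rw [hval i]
      ring

end Helpers

/-- for partitions `μ ⊆ λ`,
`S^{(k)}_{λ/μ}(x;y) = ∑_ν S_{λ/ν}(x) s_{ν'/μ'}(y) = ∑_ν S_{ν/μ}(x) s_{λ'/ν'}(y)`,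
with both sums over partitions `ν` with `μ ⊆ ν ⊆ λ`. -/
theorem stmt_12 {R : Type*} [CommRing R] (n k L : ℕ) (x : Fin n → R) (y : Fin k → R)
    (Q : PowerSeries R)
    (hQ : Q * ∏ i : Fin n, (1 - PowerSeries.C (x i) * PowerSeries.X) =
          ∏ i : Fin n, (1 + PowerSeries.C (x i) * PowerSeries.X))
    (lam mu : Fin L → ℕ)
    (hlam : ∀ i j : Fin L, i ≤ j → lam j ≤ lam i)
    (hmu : ∀ i j : Fin L, i ≤ j → mu j ≤ mu i)
    (hsub : mu ≤ lam) :
    (jtDet (thInt Q y) lam mu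
        = ∑ ν ∈ (Finset.Icc mu lam).filter (fun ν => ∀ i j : Fin L, i ≤ j → ν j ≤ ν i),
            jtDet (qInt Q) lam ν * jtDet (eInt y) ν mu) ∧
    (jtDet (thInt Q y) lam mu
        = ∑ ν ∈ (Finset.Icc mu lam).filter (fun ν => ∀ i j : Fin L, i ≤ j → ν j ≤ ν i),
            jtDet (qInt Q) ν mu * jtDet (eInt y) lam ν) := by
  classical
  have hqz : ∀ r : ℤ, r < 0 → qInt Q r = 0 := fun r hr => by
    unfold qInt; rw [if_neg (by omega)]
  have hez : ∀ r : ℤ, r < 0 → eInt y r = 0 := fun r hr => by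
    unfold eInt; rw [if_neg (by omega)]
  have h1 : thInt Q y = fun r => ∑ i ∈ Finset.range (r.toNat + 1), qInt Q (r - i) * eInt y i := by
    funext r
    unfold thInt
    by_cases hr : 0 ≤ r
    · rw [if_pos hr]
      refine Finset.sum_congr rfl fun i hi => ?_
      simp only [Finset.mem_range] at hi
      have hiN : i ≤ r.toNat := by omega
      have hq : qInt Q (r - i) = PowerSeries.coeff (r.toNat - i) Q := by
        unfold qInt
        rw [if_pos (by omega)]
        have : (r - (i:ℤ)).toNat = r.toNat - i := by omega
        rw [this]
      have he : eInt y (i : ℤ) = esymmVal y i := by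
        unfold eInt
        rw [if_pos (Int.natCast_nonneg i), Int.toNat_natCast]
      rw [hq, he]
    · rw [if_neg hr]
      have hr0 : r.toNat = 0 := Int.toNat_of_nonpos (by omega)
      rw [hr0, Finset.sum_range_one]
      have : qInt Q (r - ((0:ℕ) : ℤ)) = 0 := hqz _ (by push_cast; omega)
      rw [this, zero_mul]
  have h2 : thInt Q y = fun r => ∑ i ∈ Finset.range (r.toNat + 1), eInt y (r - i) * qInt Q i := by
    rw [h1]
    funext r
    rw [← Finset.sum_range_reflect (fun i => qInt Q (r - i) * eInt y i) (r.toNat + 1)]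
    refine Finset.sum_congr rfl fun i hi => ?_
    simp only [Finset.mem_range] at hi
    simp only [Nat.add_sub_cancel]
    by_cases hr : 0 ≤ r
    · have hiN : i ≤ r.toNat := by omega
      have e1 : ((r.toNat - i : ℕ) : ℤ) = r - i := by omega
      rw [e1]
      have e2 : r - (r - (i:ℤ)) = (i:ℤ) := by ring
      rw [e2, mul_comm]
    · have hr0 : r.toNat = 0 := Int.toNat_of_nonpos (by omega)
      have hi0 : i = 0 := by omega
      subst hi0
      rw [hr0]
      have z1 : qInt Q (r - ((0 - 0 : ℕ) : ℤ)) = 0 := hqz _ (by push_cast; omega)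
      have z2 : eInt y (r - ((0:ℕ) : ℤ)) = 0 := hez _ (by push_cast; omega)
      rw [z1, z2, zero_mul, zero_mul]
  constructor
  · rw [h1]
    exact conv_jtDet (qInt Q) (eInt y) hqz hez lam mu hlam hmu hsub
  · rw [h2]
    rw [conv_jtDet (eInt y) (qInt Q) hez hqz lam mu hlam hmu hsub]
    exact Finset.sum_congr rfl fun ν _ => mul_comm _ _
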